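/- Let P = x^3·y + x^2·p2(y) + x·p1(y) + p0(y) and Q = x^2·y + x·q1(y) + q0(y) in K[x,y] with [P,Q] = x^4·y + μ0 + μ1·x + μ2·x^2 + μ3·x^3, and suppose p2'(0) = 0 (i.e. the coefficient a_{2,1} of P vanishes). Then q1'(0) = 0. -/

import Mathlib

open MvPolynomial

/-- The Jacobian bracket on K[x,y]. -/
noncomputable def jbr {K : Type*} [CommRing K] (P Q : MvPolynomial (Fin 2) K) :
    MvPolynomial (Fin 2) K :=
  pderiv 0 P * pderiv 1 Q - pderiv 1 P * pderiv 0 Q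

/-- Embedding of K[y] into K[x,y]. -/
noncomputable def py {K : Type*} [CommRing K] (p : Polynomial K) : MvPolynomial (Fin 2) K :=
  Polynomial.aeval (MvPolynomial.X 1) p

lemma pderiv0_py {K : Type*} [CommRing K] (p : Polynomial K) : pderiv 0 (py p) = 0 := by
  unfold py
  induction p using Polynomial.induction_on' with
  | add f g hf hg => simp [hf, hg]
  | monomial n a => simp [Polynomial.aeval_monomial]

lemma pderiv1_py {K : Type*} [CommRing K] (p : Polynomial K) :
    pderiv 1 (py p) = py (Polynomial.derivative p) := by
  unfold py
  induction p using Polynomial.induction_on' with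
  | add f g hf hg => simp [hf, hg]
  | monomial n a =>
    simp [Polynomial.aeval_monomial, Polynomial.derivative_monomial]
    ring

lemma psi_py {K : Type*} [CommRing K] (p : Polynomial K) :
    (aeval ![Polynomial.X, 0] : MvPolynomial (Fin 2) K →ₐ[K] Polynomial K) (py p)
      = Polynomial.C (p.eval 0) := by
  unfold py
  induction p using Polynomial.induction_on' with
  | add f g hf hg => simp [hf, hg]
  | monomial n a =>
    rcases n with _ | n <;>
      simp [Polynomial.aeval_monomial, zero_pow, Polynomial.C_eq_algebraMap,
        ← Polynomial.algebraMap_eq] <;> simp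

theorem stmt10 {K : Type*} [Field K] [CharZero K]
    (p0 p1 p2 q0 q1 : Polynomial K) (μ0 μ1 μ2 μ3 : K)
    (P Q : MvPolynomial (Fin 2) K)
    (hP : P = X 0 ^ 3 * X 1 + X 0 ^ 2 * py p2 + X 0 * py p1 + py p0)
    (hQ : Q = X 0 ^ 2 * X 1 + X 0 * py q1 + py q0)
    (hbr : jbr P Q = X 0 ^ 4 * X 1 + C μ0 + C μ1 * X 0 + C μ2 * X 0 ^ 2 + C μ3 * X 0 ^ 3)
    (hp2 : (Polynomial.derivative p2).eval 0 = 0) :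
    (Polynomial.derivative q1).eval 0 = 0 := by

  subst hP hQ
  simp only [jbr, map_add, pderiv_mul, pderiv0_py, pderiv1_py] at hbr
  simp [pderiv_X] at hbr
  have h := congrArg (fun r =>
    ((aeval ![Polynomial.X, 0] : MvPolynomial (Fin 2) K →ₐ[K] Polynomial K) (pderiv 1 r)).coeff 3)
    hbr
  simp only [map_add, map_sub, map_mul, map_pow, pderiv_mul, pderiv0_py, pderiv1_py, pderiv_X,
    psi_py, aeval_X, map_one, map_zero, map_natCast, aeval_C,
    show (pderiv 1) (2 : MvPolynomial (Fin 2) K) = 0 by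
      rw [← map_ofNat (C : K →+* MvPolynomial (Fin 2) K) 2, pderiv_C]] at h
  simp [pderiv_X, Pi.single] at h
  set a1 := Polynomial.eval 0 p1
  set a2 := Polynomial.eval 0 p2
  set b0 := Polynomial.eval 0 (Polynomial.derivative q0)
  set b1 := Polynomial.eval 0 (Polynomial.derivative q1)
  set c0 := Polynomial.eval 0 (Polynomial.derivative p0)
  set c1 := Polynomial.eval 0 (Polynomial.derivative p1)
  set c2 := Polynomial.eval 0 (Polynomial.derivative p2)
  set d0 := Polynomial.eval 0 (Polynomial.derivative (Polynomial.derivative q0))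
  set d1 := Polynomial.eval 0 (Polynomial.derivative (Polynomial.derivative q1))
  ring_nf at h
  norm_num [Polynomial.coeff_add, Polynomial.coeff_sub, Polynomial.coeff_mul_C,
    Polynomial.coeff_X, Polynomial.coeff_C, Polynomial.coeff_X_pow, Polynomial.coeff_C_mul,
    mul_assoc] at h
  linear_combination h / 2
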